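/- Let n ≥ 1 and let w_1,…,w_n and w′_1,…,w′_n be complex numbers such that: w_i ∉ {0, −1} for all i; w_i ≠ w′_j for all i, j; and for all subsets S, T of {1,…,n} with |S| = |T| and 1 ≤ |S| ≤ n−1 one has ∏_{i∈T}(w_i+1) ≠ ∏_{i∈S}(w′_i+1). Then ∑_{σ,σ′ ∈ S_n} sgn(σ)sgn(σ′) [ ∏_{i=1}^n ( w′_{σ′(i)} / w_{σ(i)} )^{i−1} ] / [ ∏_{j=2}^n ( 1 − ∏_{i=j}^n (w′_{σ′(i)}+1)/(w_{σ(i)}+1) ) ] = ( ∏_{j=1}^n (w_j+1) − ∏_{j=1}^n (w′_j+1) ) · det[ 1/(w_i − w′_{i′}) ]_{i,i′=1}^n, where S_n is the symmetric group on {1,…,n}. -/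

import Mathlib

open scoped BigOperators
open Finset Polynomial Matrix Filter Topology

namespace PermSumAux

noncomputable section

def CM {n : ℕ} (a b : Fin n → ℂ) : Matrix (Fin n) (Fin n) ℂ :=
  Matrix.of fun i j => 1 / (a i - b j)

def lhsSum (n : ℕ) (w w' : Fin n → ℂ) : ℂ :=
  ∑ σ : Equiv.Perm (Fin n), ∑ σ' : Equiv.Perm (Fin n),
      ((Equiv.Perm.sign σ : ℤ) : ℂ) * ((Equiv.Perm.sign σ' : ℤ) : ℂ) *
        (∏ i : Fin n, (w' (σ' i) / w (σ i)) ^ (i : ℕ)) /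
        ∏ j ∈ Finset.univ.filter (fun j : Fin n => 0 < (j : ℕ)),
          (1 - ∏ i ∈ Finset.univ.filter (fun i : Fin n => j ≤ i),
            ((w' (σ' i) + 1) / (w (σ i) + 1)))


lemma keyPoly {N : ℕ} (hN : 0 < N) (a b : Fin N → ℂ) (γ : ℂ) (c : Fin N → ℂ)
    (hbinj : Function.Injective b)
    (hγ : (1 + γ) * ∏ i, (a i + 1) = ∏ j, (b j + 1))
    (hc : ∀ j, c j * ((b j + 1) * ∏ j' ∈ univ.erase j, (b j - b j')) =
      -(b j - γ) * ∏ i, (b j - a i))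
    (hb1 : ∀ j, b j + 1 ≠ 0) :
    ∀ z : ℂ, z * ∏ j, (z - b j)
      - (z + 1) * (∑ j, c j * ∏ j' ∈ univ.erase j, (z - b j'))
      - (z - γ) * ∏ i, (z - a i) = 0 := by
  set A : ℂ[X] := X * ∏ j, (X - C (b j)) with hA
  set B : ℂ[X] := (X - C γ) * ∏ i, (X - C (a i)) with hB
  set T : ℂ[X] := (X + C 1) * (∑ j, C (c j) * ∏ j' ∈ univ.erase j, (X - C (b j'))) with hT
  have hprodmon : ∀ (f : Fin N → ℂ), (∏ j, (X - C (f j)) : ℂ[X]).Monic :=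
    fun f => monic_prod_of_monic _ _ fun i _ => monic_X_sub_C _
  have hproddeg : ∀ (f : Fin N → ℂ), (∏ j, (X - C (f j)) : ℂ[X]).natDegree = N := by
    intro f
    rw [natDegree_prod_of_monic _ _ fun i _ => monic_X_sub_C _]
    simp
  have hAmonic : A.Monic := monic_X.mul (hprodmon b)
  have hBmonic : B.Monic := (monic_X_sub_C γ).mul (hprodmon a)
  have hAdeg : A.natDegree = N + 1 := by
    rw [hA, monic_X.natDegree_mul (hprodmon b), hproddeg, natDegree_X, add_comm]
  have hBdeg : B.natDegree = N + 1 := by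
    rw [hB, (monic_X_sub_C γ).natDegree_mul (hprodmon a), hproddeg, natDegree_X_sub_C, add_comm]
  have hABdeg : (A - B).natDegree ≤ N := by
    by_cases h : A - B = 0
    · simp [h]
    · have hd : (A - B).degree < A.degree := by
        refine Polynomial.degree_sub_lt ?_ hAmonic.ne_zero
          (hAmonic.leadingCoeff.trans hBmonic.leadingCoeff.symm)
        rw [Polynomial.degree_eq_natDegree hAmonic.ne_zero,
          Polynomial.degree_eq_natDegree hBmonic.ne_zero, hAdeg, hBdeg]
      have : (A - B).degree < ((N + 1 : ℕ) : WithBot ℕ) := by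
        rwa [Polynomial.degree_eq_natDegree hAmonic.ne_zero, hAdeg] at hd
      have := (Polynomial.natDegree_lt_iff_degree_lt h).2 this
      omega
  have hTdeg : T.natDegree ≤ N := by
    refine le_trans (natDegree_mul_le) ?_
    have h1 : (X + C (1:ℂ)).natDegree ≤ 1 := by
      simpa using natDegree_X_add_C (1:ℂ) ▸ le_refl _
    have h2 : (∑ j, C (c j) * ∏ j' ∈ univ.erase j, (X - C (b j')) : ℂ[X]).natDegree ≤ N - 1 := by
      refine natDegree_sum_le_of_forall_le _ _ fun j _ => ?_
      refine le_trans natDegree_mul_le ?_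
      rw [natDegree_C]
      refine le_trans (le_of_eq (zero_add _)) ?_
      refine le_trans (natDegree_prod_le _ _) ?_
      have : ∀ j' ∈ univ.erase j, ((X : ℂ[X]) - C (b j')).natDegree ≤ 1 := by
        intro j' _; simp [natDegree_X_sub_C]
      refine le_trans (Finset.sum_le_sum this) ?_
      simp [Finset.card_erase_of_mem]
    omega
  have hP0 : A - T - B = 0 := by
    have heq : A - T - B = (A - B) - T := by ring
    rw [heq]
    refine eq_zero_of_natDegree_lt_card_of_eval_eq_zero' _
      (insert (-1 : ℂ) (univ.image b)) ?_ ?_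
    · intro x hx
      rcases Finset.mem_insert.1 hx with rfl | hx
      · -- x = -1
        have hT1 : T.eval (-1) = 0 := by
          simp [hT]
        have hA1 : A.eval (-1) = -((-1 : ℂ)^N * ∏ j, (b j + 1)) := by
          simp only [hA, eval_mul, eval_X, eval_prod, eval_sub, eval_C]
          rw [show (∏ j, (-1 - b j) : ℂ) = ∏ j, (-1 : ℂ) * (b j + 1) by
            refine Finset.prod_congr rfl fun j _ => by ring]
          rw [Finset.prod_mul_distrib, Finset.prod_const]
          simp [Finset.card_univ]
          try ring
        have hB1 : B.eval (-1) = -((1 + γ) * ((-1 : ℂ)^N * ∏ i, (a i + 1))) := by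
          simp only [hB, eval_mul, eval_X, eval_prod, eval_sub, eval_C]
          rw [show (∏ i, (-1 - a i) : ℂ) = ∏ i, (-1 : ℂ) * (a i + 1) by
            refine Finset.prod_congr rfl fun i _ => by ring]
          rw [Finset.prod_mul_distrib, Finset.prod_const]
          simp [Finset.card_univ]
          try ring
        rw [eval_sub, eval_sub, hA1, hB1, hT1]
        linear_combination (-1:ℂ)^N * hγ
      · obtain ⟨j, _, rfl⟩ := Finset.mem_image.1 hx
        have hAj : A.eval (b j) = 0 := by
          simp only [hA, eval_mul, eval_X, eval_prod, eval_sub, eval_C]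
          rw [Finset.prod_eq_zero (Finset.mem_univ j) (by ring)]
          ring
        have hTj : T.eval (b j) = -(b j - γ) * ∏ i, (b j - a i) := by
          simp only [hT, eval_mul, eval_add, eval_X, eval_C, eval_finset_sum]
          rw [Finset.sum_eq_single j]
          · simp only [eval_mul, eval_C, eval_prod, eval_sub, eval_X]
            rw [← hc j]; ring
          · intro j' _ hj'
            simp only [eval_mul, eval_C, eval_prod, eval_sub, eval_X]
            rw [Finset.prod_eq_zero (Finset.mem_erase.2 ⟨Ne.symm hj', Finset.mem_univ j⟩) (by ring)]
            ring
          · intro h; exact absurd (Finset.mem_univ j) h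
        have hBj : B.eval (b j) = (b j - γ) * ∏ i, (b j - a i) := by
          simp [hB, eval_prod]
        rw [eval_sub, eval_sub, hAj, hTj, hBj]; ring
    · rw [Finset.card_insert_of_notMem, Finset.card_image_of_injective _ hbinj]
      · have : (A - B).natDegree ≤ N := hABdeg
        have h2 : ((A - B) - T).natDegree ≤ N := le_trans (natDegree_sub_le _ _) (by omega)
        simpa using Nat.lt_succ_of_le h2
      · intro h
        obtain ⟨j, _, hj⟩ := Finset.mem_image.1 h
        exact hb1 j (by rw [hj]; ring)
  intro z
  have := congrArg (Polynomial.eval z) hP0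
  simpa [hA, hB, hT, eval_prod, eval_finset_sum] using this

lemma D_generic (m : ℕ) (a b : Fin (m + 1) → ℂ)
    (ha0 : ∀ i, a i ≠ 0) (ha1 : ∀ i, a i + 1 ≠ 0)
    (hb0 : ∀ j, b j ≠ 0) (hb1 : ∀ j, b j + 1 ≠ 0)
    (hbinj : Function.Injective b) (hab : ∀ i j, a i ≠ b j) :
    ∑ k : Fin (m + 1), ∑ l : Fin (m + 1),
      (-1 : ℂ) ^ ((k : ℕ) + (l : ℕ)) *
        ((∏ j : Fin m, b (l.succAbove j)) *
          ((∏ i : Fin m, (a (k.succAbove i) + 1)) / ∏ i : Fin m, a (k.succAbove i)) *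
          ((CM a b).submatrix k.succAbove l.succAbove).det) =
      ((∏ i, (a i + 1)) - ∏ j, (b j + 1)) * (CM a b).det := by
  have hu : (∏ i, (a i + 1)) ≠ 0 := Finset.prod_ne_zero_iff.2 fun i _ => ha1 i
  have hA : (∏ i, a i) ≠ 0 := Finset.prod_ne_zero_iff.2 fun i _ => ha0 i
  have hB : (∏ j, b j) ≠ 0 := Finset.prod_ne_zero_iff.2 fun j _ => hb0 j
  set γ : ℂ := (∏ j, (b j + 1)) / (∏ i, (a i + 1)) - 1 with hγdef
  set c : Fin (m + 1) → ℂ := fun l =>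
    -(b l - γ) * (∏ i, (b l - a i)) / ((b l + 1) * ∏ j' ∈ univ.erase l, (b l - b j')) with hcdef
  set x : Fin (m + 1) → ℂ := fun l => ((∏ i, (a i + 1)) / (∏ i, a i)) * c l with hxdef
  set r : Fin (m + 1) → ℂ := fun k =>
    (∏ i : Fin m, (a (k.succAbove i) + 1)) / ∏ i : Fin m, a (k.succAbove i) with hrdef
  set s : Fin (m + 1) → ℂ := fun l => ∏ j : Fin m, b (l.succAbove j) with hsdef
  have hγ : (1 + γ) * ∏ i, (a i + 1) = ∏ j, (b j + 1) := by
    rw [hγdef]; field_simp; ring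
  have herase : ∀ j : Fin (m + 1), (b j + 1) * ∏ j' ∈ univ.erase j, (b j - b j') ≠ 0 := by
    intro j
    refine mul_ne_zero (hb1 j) (Finset.prod_ne_zero_iff.2 fun j' hj' => ?_)
    exact sub_ne_zero.2 fun h => (Finset.mem_erase.1 hj').1 (hbinj h.symm)
  have hc : ∀ j, c j * ((b j + 1) * ∏ j' ∈ univ.erase j, (b j - b j')) =
      -(b j - γ) * ∏ i, (b j - a i) := by
    intro j; rw [hcdef]; exact div_mul_cancel₀ _ (herase j)
  have key := keyPoly (Nat.succ_pos m) a b γ c hbinj hγ hc hb1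
  -- C x = r
  have hCx : ∀ k, ∑ l, (1 / (a k - b l)) * x l = r k := by
    intro k
    have hPk : (∏ j, (a k - b j)) ≠ 0 :=
      Finset.prod_ne_zero_iff.2 fun j _ => sub_ne_zero.2 (hab k j)
    have hzero : (∏ i, (a k - a i)) = 0 :=
      Finset.prod_eq_zero (Finset.mem_univ k) (sub_self _)
    have hsum : (a k + 1) * (∑ j, c j * ∏ j' ∈ univ.erase j, (a k - b j')) =
        a k * ∏ j, (a k - b j) := by
      have h := key (a k)
      rw [hzero] at h
      linear_combination -h
    have h1 : (∑ l, (1 / (a k - b l)) * x l) * ((∏ j, (a k - b j)) * (a k + 1)) =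
        ((∏ i, (a i + 1)) / (∏ i, a i)) * (a k * ∏ j, (a k - b j)) := by
      rw [Finset.sum_mul]
      have hterm : ∀ l ∈ univ, (1 / (a k - b l)) * x l * ((∏ j, (a k - b j)) * (a k + 1)) =
          ((∏ i, (a i + 1)) / (∏ i, a i)) * (a k + 1) *
            (c l * ∏ j' ∈ univ.erase l, (a k - b j')) := by
        intro l _
        have hsplit : (∏ j, (a k - b j)) = (a k - b l) * ∏ j' ∈ univ.erase l, (a k - b j') :=
          (Finset.mul_prod_erase univ _ (Finset.mem_univ l)).symm
        have hne : a k - b l ≠ 0 := sub_ne_zero.2 (hab k l)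
        rw [hxdef, hsplit]
        field_simp
        try ring
      rw [Finset.sum_congr rfl hterm, ← Finset.mul_sum, mul_assoc, hsum]
      try ring
    have h2 : r k * ((∏ j, (a k - b j)) * (a k + 1)) =
        ((∏ i, (a i + 1)) / (∏ i, a i)) * (a k * ∏ j, (a k - b j)) := by
      have e1 : (∏ i, (a i + 1)) = (a k + 1) * ∏ i : Fin m, (a (k.succAbove i) + 1) :=
        Fin.prod_univ_succAbove (fun i => a i + 1) k
      have e2 : (∏ i, a i) = a k * ∏ i : Fin m, a (k.succAbove i) :=
        Fin.prod_univ_succAbove (fun i => a i) k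
      have hsa : (∏ i : Fin m, a (k.succAbove i)) ≠ 0 := by
        intro h; exact hA (by rw [e2, h, mul_zero])
      rw [hrdef, e1, e2]
      field_simp [hsa, ha0 k]
      try ring
    exact mul_right_cancel₀ (mul_ne_zero hPk (ha1 k)) (h1.trans h2.symm)
  -- s ⬝ x = ∏ u - ∏ v
  have hsx : ∑ l, s l * x l = (∏ i, (a i + 1)) - ∏ j, (b j + 1) := by
    have h := key 0
    have e1 : ∀ j : Fin (m+1), (∏ j' ∈ univ.erase j, ((0:ℂ) - b j')) =
        (-1 : ℂ) ^ m * ∏ j' ∈ univ.erase j, b j' := by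
      intro j
      rw [show (fun j' => (0:ℂ) - b j') = fun j' => (-1 : ℂ) * b j' from funext fun _ => by ring]
      rw [Finset.prod_mul_distrib, Finset.prod_const, Finset.card_erase_of_mem (Finset.mem_univ j)]
      simp
    have e2 : (∏ i, ((0:ℂ) - a i)) = (-1 : ℂ) ^ (m + 1) * ∏ i, a i := by
      rw [show (fun i => (0:ℂ) - a i) = fun i => (-1 : ℂ) * a i from funext fun _ => by ring]
      rw [Finset.prod_mul_distrib, Finset.prod_const]
      simp
    have hsum0 : (∑ j, c j * ∏ j' ∈ univ.erase j, b j') = -γ * ∏ i, a i := by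
      have h' : (∑ j, c j * ((-1:ℂ)^m * ∏ j' ∈ univ.erase j, b j')) =
          γ * ((-1 : ℂ) ^ (m+1) * ∏ i, a i) := by
        calc (∑ j, c j * ((-1:ℂ)^m * ∏ j' ∈ univ.erase j, b j'))
            = ∑ j, c j * ∏ j' ∈ univ.erase j, ((0:ℂ) - b j') := by
              refine Finset.sum_congr rfl fun j _ => by rw [e1]
          _ = γ * ∏ i, ((0:ℂ) - a i) := by linear_combination -h
          _ = γ * ((-1 : ℂ) ^ (m+1) * ∏ i, a i) := by rw [e2]
      have hm : ((-1 : ℂ) ^ m) ≠ 0 := pow_ne_zero _ (by norm_num)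
      apply mul_left_cancel₀ hm
      rw [Finset.mul_sum]
      calc (∑ j, (-1:ℂ)^m * (c j * ∏ j' ∈ univ.erase j, b j'))
          = ∑ j, c j * ((-1:ℂ)^m * ∏ j' ∈ univ.erase j, b j') := by
            refine Finset.sum_congr rfl fun j _ => by ring
        _ = γ * ((-1 : ℂ) ^ (m+1) * ∏ i, a i) := h'
        _ = (-1:ℂ)^m * (-γ * ∏ i, a i) := by ring
    have hsl : ∀ l, s l * b l = ∏ j, b j := by
      intro l
      rw [hsdef]
      exact (mul_comm _ _).trans (Fin.prod_univ_succAbove (fun j => b j) l).symm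
    have hterm : ∀ l ∈ univ, s l * x l =
        ((∏ i, (a i + 1)) / (∏ i, a i)) * (c l * ∏ j' ∈ univ.erase l, b j') := by
      intro l _
      have : (∏ j' ∈ univ.erase l, b j') * b l = ∏ j, b j :=
        Finset.prod_erase_mul univ _ (Finset.mem_univ l)
      have hsl' : s l = ∏ j' ∈ univ.erase l, b j' := by
        apply mul_right_cancel₀ (hb0 l)
        rw [hsl l, this]
      rw [hsl', hxdef]; ring
    rw [Finset.sum_congr rfl hterm, ← Finset.mul_sum, hsum0]
    rw [hγdef]
    field_simp
    ring
  -- matrix algebra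
  have hCxvec : CM a b *ᵥ x = r := by
    funext k
    simpa [Matrix.mulVec, dotProduct, CM] using hCx k
  have step1 : ∀ k : Fin (m + 1), (∑ l : Fin (m + 1),
      (-1 : ℂ) ^ ((k : ℕ) + (l : ℕ)) *
        ((∏ j : Fin m, b (l.succAbove j)) *
          ((∏ i : Fin m, (a (k.succAbove i) + 1)) / ∏ i : Fin m, a (k.succAbove i)) *
          ((CM a b).submatrix k.succAbove l.succAbove).det)) =
      r k * ((CM a b).updateRow k s).det := by
    intro k
    rw [Matrix.det_succ_row ((CM a b).updateRow k s) k, Finset.mul_sum]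
    refine Finset.sum_congr rfl fun l _ => ?_
    have hsub : ((CM a b).updateRow k s).submatrix k.succAbove l.succAbove =
        (CM a b).submatrix k.succAbove l.succAbove := by
      ext i j
      simp [Matrix.submatrix_apply, Matrix.updateRow_ne (Fin.succAbove_ne k i)]
    rw [hsub, Matrix.updateRow_self]
    rw [hrdef, hsdef]
    ring
  calc (∑ k : Fin (m + 1), ∑ l : Fin (m + 1),
      (-1 : ℂ) ^ ((k : ℕ) + (l : ℕ)) *
        ((∏ j : Fin m, b (l.succAbove j)) *
          ((∏ i : Fin m, (a (k.succAbove i) + 1)) / ∏ i : Fin m, a (k.succAbove i)) *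
          ((CM a b).submatrix k.succAbove l.succAbove).det))
      = ∑ k, r k * ((CM a b).updateRow k s).det := Finset.sum_congr rfl fun k _ => step1 k
    _ = ∑ k, r k * ((Matrix.adjugate (CM a b))ᵀ *ᵥ s) k := by
        refine Finset.sum_congr rfl fun k _ => ?_
        congr 1
        rw [← Matrix.det_transpose, ← Matrix.updateCol_transpose]
        rw [← Matrix.cramer_apply, Matrix.cramer_eq_adjugate_mulVec, Matrix.adjugate_transpose]
    _ = s ⬝ᵥ (Matrix.adjugate (CM a b) *ᵥ r) := by
        simp only [Matrix.mulVec, dotProduct, Matrix.transpose_apply, Finset.mul_sum,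
          Finset.sum_mul]
        rw [Finset.sum_comm]
        exact Finset.sum_congr rfl fun l _ => Finset.sum_congr rfl fun k _ => by ring
    _ = s ⬝ᵥ ((CM a b).det • x) := by
        rw [← hCxvec, Matrix.mulVec_mulVec, Matrix.adjugate_mul, Matrix.smul_mulVec,
          Matrix.one_mulVec]
    _ = (CM a b).det * ∑ l, s l * x l := by
        simp only [dotProduct, Pi.smul_apply, smul_eq_mul, Finset.mul_sum]
        exact Finset.sum_congr rfl fun l _ => by ring
    _ = ((∏ i, (a i + 1)) - ∏ j, (b j + 1)) * (CM a b).det := by rw [hsx]; ring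

lemma contAt_finset_sum {ι : Type*} (s : Finset ι) (f : ι → ℂ → ℂ) (x : ℂ)
    (h : ∀ i ∈ s, ContinuousAt (f i) x) :
    ContinuousAt (fun t => ∑ i ∈ s, f i t) x := by
  classical
  induction s using Finset.cons_induction with
  | empty => simpa using continuousAt_const
  | cons i s hi ih =>
    simp only [Finset.sum_cons]
    exact (h i (Finset.mem_cons_self i s)).add
      (ih fun j hj => h j (Finset.mem_cons.2 (Or.inr hj)))

lemma contAt_finset_prod {ι : Type*} (s : Finset ι) (f : ι → ℂ → ℂ) (x : ℂ)
    (h : ∀ i ∈ s, ContinuousAt (f i) x) :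
    ContinuousAt (fun t => ∏ i ∈ s, f i t) x := by
  classical
  induction s using Finset.cons_induction with
  | empty => simpa using continuousAt_const
  | cons i s hi ih =>
    simp only [Finset.prod_cons]
    exact (h i (Finset.mem_cons_self i s)).mul
      (ih fun j hj => h j (Finset.mem_cons.2 (Or.inr hj)))

lemma linFinite (p q : ℂ) (hq : q ≠ 0) : {t : ℂ | p + t * q = 0}.Finite := by
  refine Set.Finite.subset (Set.finite_singleton (-p / q)) ?_
  intro t ht
  simp only [Set.mem_setOf_eq] at ht
  simp only [Set.mem_singleton_iff]
  field_simp
  linear_combination ht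

lemma D_weak (m : ℕ) (a b : Fin (m + 1) → ℂ)
    (ha0 : ∀ i, a i ≠ 0) (ha1 : ∀ i, a i + 1 ≠ 0) (hab : ∀ i j, a i ≠ b j) :
    ∑ k : Fin (m + 1), ∑ l : Fin (m + 1),
      (-1 : ℂ) ^ ((k : ℕ) + (l : ℕ)) *
        ((∏ j : Fin m, b (l.succAbove j)) *
          ((∏ i : Fin m, (a (k.succAbove i) + 1)) / ∏ i : Fin m, a (k.succAbove i)) *
          ((CM a b).submatrix k.succAbove l.succAbove).det) =
      ((∏ i, (a i + 1)) - ∏ j, (b j + 1)) * (CM a b).det := by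
  set d : Fin (m + 1) → ℂ := fun j => ((j : ℕ) : ℂ) + 1 with hd
  have hd0 : ∀ j, d j ≠ 0 := by
    intro j h
    rw [hd] at h
    simp only at h
    have : (((j : ℕ) + 1 : ℕ) : ℂ) = 0 := by push_cast; linear_combination h
    have h2 : (j : ℕ) + 1 = 0 := by exact_mod_cast this
    omega
  have hdinj : Function.Injective d := by
    intro i j hij
    rw [hd] at hij
    have : ((i : ℕ) : ℂ) = ((j : ℕ) : ℂ) := by linear_combination hij
    exact Fin.ext (Nat.cast_injective this)
  set β : ℂ → Fin (m + 1) → ℂ := fun t j => b j + t * d j with hβ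
  set φ : ℂ → ℂ := fun t =>
    (∑ k : Fin (m + 1), ∑ l : Fin (m + 1),
      (-1 : ℂ) ^ ((k : ℕ) + (l : ℕ)) *
        ((∏ j : Fin m, β t (l.succAbove j)) *
          ((∏ i : Fin m, (a (k.succAbove i) + 1)) / ∏ i : Fin m, a (k.succAbove i)) *
          ((CM a (β t)).submatrix k.succAbove l.succAbove).det)) -
      ((∏ i, (a i + 1)) - ∏ j, (β t j + 1)) * (CM a (β t)).det with hφ
  -- bad set is finite
  set Bad : Set ℂ := (⋃ j, {t : ℂ | b j + t * d j = 0}) ∪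
      (⋃ j, {t : ℂ | (b j + 1) + t * d j = 0}) ∪
      (⋃ i, ⋃ j, {t : ℂ | i ≠ j ∧ (b i - b j) + t * (d i - d j) = 0}) ∪
      (⋃ i, ⋃ j, {t : ℂ | (b j - a i) + t * d j = 0}) with hBad
  have hBadFin : Bad.Finite := by
    rw [hBad]
    refine ((((Set.finite_iUnion fun j => linFinite _ _ (hd0 j)).union
      (Set.finite_iUnion fun j => linFinite _ _ (hd0 j))).union
      (Set.finite_iUnion fun i => Set.finite_iUnion fun j => ?_)).union
      (Set.finite_iUnion fun i => Set.finite_iUnion fun j => linFinite _ _ (hd0 j)))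
    by_cases hij : i = j
    · refine Set.Finite.subset (Set.finite_empty) ?_
      intro t ht
      exact absurd hij ht.1
    · exact Set.Finite.subset (linFinite (b i - b j) (d i - d j)
        (sub_ne_zero.2 fun h => hij (hdinj h))) fun t ht => ht.2
  -- φ vanishes off the bad set
  have hgen : ∀ t : ℂ, t ∉ Bad → φ t = 0 := by
    intro t ht
    rw [hBad] at ht
    simp only [Set.mem_union, Set.mem_iUnion, Set.mem_setOf_eq, not_or, not_exists] at ht
    obtain ⟨⟨⟨h1, h2⟩, h3⟩, h4⟩ := ht
    have hb0' : ∀ j, β t j ≠ 0 := fun j h => h1 j (by rw [hβ] at h; linear_combination h)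
    have hb1' : ∀ j, β t j + 1 ≠ 0 := fun j h => h2 j (by rw [hβ] at h; linear_combination h)
    have hbinj' : Function.Injective (β t) := by
      intro i j hij
      by_contra hne
      exact h3 i j ⟨hne, by rw [hβ] at hij; simp only at hij; linear_combination hij⟩
    have hab' : ∀ i j, a i ≠ β t j := by
      intro i j h
      exact h4 i j (by rw [hβ] at h; simp only at h; linear_combination -h)
    have := D_generic m a (β t) ha0 ha1 hb0' hb1' hbinj' hab'
    rw [hφ]
    rw [sub_eq_zero]
    exact this
  -- eventually zero on punctured neighbourhood
  have hev : ∀ᶠ t in 𝓝[≠] (0 : ℂ), φ t = 0 := by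
    have hfin : (Bad \ {0}).Finite := hBadFin.subset Set.diff_subset
    have hclosed : IsClosed (Bad \ {0}) := hfin.isClosed
    have hmem : (Bad \ {0})ᶜ ∈ 𝓝 (0 : ℂ) :=
      hclosed.isOpen_compl.mem_nhds (by simp)
    have h1 : ∀ᶠ t in 𝓝[≠] (0 : ℂ), t ∈ (Bad \ {0})ᶜ :=
      eventually_nhdsWithin_of_eventually_nhds (eventually_of_mem hmem fun t ht => ht)
    have h2 : ∀ᶠ t in 𝓝[≠] (0 : ℂ), t ≠ 0 := eventually_mem_nhdsWithin
    filter_upwards [h1, h2] with t ht hne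
    refine hgen t fun hbad => ht ⟨hbad, hne⟩
  -- continuity at 0
  have hcont : ContinuousAt φ 0 := by
    rw [hφ]
    have hβc : ∀ j, Continuous fun t : ℂ => β t j := by
      intro j
      rw [hβ]
      exact continuous_const.add (continuous_id.mul continuous_const)
    have hdet : ∀ (f : Fin m → Fin (m + 1)) (g : Fin m → Fin (m + 1)),
        (∀ i j, a (f i) - b (g j) ≠ 0) →
        ContinuousAt (fun t : ℂ => ((CM a (β t)).submatrix f g).det) 0 := by
      intro f g hfg
      have hM : ContinuousAt (fun t : ℂ => (CM a (β t)).submatrix f g) 0 := by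
        refine continuousAt_pi.2 ?_
        intro i
        rw [continuousAt_pi]
        intro j
        have : (fun t : ℂ => ((CM a (β t)).submatrix f g) i j) =
            fun t : ℂ => 1 / (a (f i) - β t (g j)) := rfl
        rw [this]
        refine ContinuousAt.div continuousAt_const
          ((continuous_const.sub (hβc (g j))).continuousAt) ?_
        simp only [hβ, mul_comm]
        simpa using hfg i j
      exact (continuous_id.matrix_det.continuousAt).comp hM
    have hdet' : ContinuousAt (fun t : ℂ => (CM a (β t)).det) 0 := by
      have hM : ContinuousAt (fun t : ℂ => CM a (β t)) 0 := by
        refine continuousAt_pi.2 ?_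
        intro i
        rw [continuousAt_pi]
        intro j
        have : (fun t : ℂ => (CM a (β t)) i j) = fun t : ℂ => 1 / (a i - β t j) := rfl
        rw [this]
        refine ContinuousAt.div continuousAt_const
          ((continuous_const.sub (hβc j)).continuousAt) ?_
        simp only [hβ]
        simpa using sub_ne_zero.2 (hab i j)
      exact (continuous_id.matrix_det.continuousAt).comp hM
    refine ContinuousAt.sub ?_ ?_
    · refine contAt_finset_sum _ _ _ fun k _ => ?_
      refine contAt_finset_sum _ _ _ fun l _ => ?_
      refine ContinuousAt.mul continuousAt_const ?_
      refine ContinuousAt.mul (ContinuousAt.mul ?_ continuousAt_const) ?_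
      · exact contAt_finset_prod _ _ _ fun j _ => (hβc (l.succAbove j)).continuousAt
      · exact hdet k.succAbove l.succAbove fun i j => sub_ne_zero.2 (hab _ _)
    · refine ContinuousAt.mul (ContinuousAt.sub continuousAt_const ?_) hdet'
      exact contAt_finset_prod _ _ _ fun j _ => ((hβc j).add continuous_const).continuousAt
  -- conclude
  have h0 : φ 0 = 0 := by
    have l1 : Tendsto φ (𝓝[≠] (0 : ℂ)) (𝓝 (φ 0)) := hcont.continuousWithinAt
    have l2 : Tendsto φ (𝓝[≠] (0 : ℂ)) (𝓝 0) :=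
      Tendsto.congr' (by filter_upwards [hev] with t ht; exact ht.symm) tendsto_const_nhds
    exact tendsto_nhds_unique l1 l2
  have hβ0 : β 0 = b := by funext j; rw [hβ]; simp
  simp only [hφ, hβ0] at h0
  exact sub_eq_zero.1 h0

def ck {m : ℕ} (k : Fin (m + 1)) : Equiv.Perm (Fin m) :=
  Fin.cases 1 (fun p => p.cycleRange) k

lemma hck {m : ℕ} (k : Fin (m + 1)) (i : Fin m) :
    Equiv.swap 0 k i.succ = k.succAbove (ck k i) := by
  induction k using Fin.cases with
  | zero => simp [ck, Fin.succAbove_zero]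
  | succ p => rw [ck]; simp [Fin.succAbove_cycleRange]

lemma hsgn {m : ℕ} (k : Fin (m + 1)) :
    (if k = 0 then (1 : ℂ) else -1) * ((Equiv.Perm.sign (ck k) : ℤ) : ℂ) =
      (-1 : ℂ) ^ (k : ℕ) := by
  induction k using Fin.cases with
  | zero => simp [ck]
  | succ p =>
    rw [ck]
    simp only [Fin.cases_succ, Fin.sign_cycleRange, Fin.succ_ne_zero, if_neg, Fin.val_succ]
    push_cast
    rw [pow_succ]
    ring

lemma embProd {m : ℕ} (k : Fin (m + 1)) (f : Fin (m + 1) → ℂ) :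
    ∏ i : Fin m, f (Equiv.swap 0 k i.succ) = ∏ i : Fin m, f (k.succAbove i) := by
  calc ∏ i : Fin m, f (Equiv.swap 0 k i.succ)
      = ∏ i : Fin m, f (k.succAbove (ck k i)) :=
        Finset.prod_congr rfl fun i _ => by rw [hck]
    _ = ∏ i : Fin m, f (k.succAbove i) := Equiv.prod_comp (ck k) (fun j => f (k.succAbove j))

lemma lemD (m : ℕ) (a b : Fin (m + 1) → ℂ)
    (ha0 : ∀ i, a i ≠ 0) (ha1 : ∀ i, a i + 1 ≠ 0) (hab : ∀ i j, a i ≠ b j) :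
    ∑ k : Fin (m + 1), ∑ l : Fin (m + 1),
      (if k = 0 then (1 : ℂ) else -1) * (if l = 0 then (1 : ℂ) else -1) *
        ((∏ j : Fin m, b (Equiv.swap 0 l j.succ)) *
          ((∏ i : Fin m, (a (Equiv.swap 0 k i.succ) + 1)) /
            ∏ i : Fin m, a (Equiv.swap 0 k i.succ)) *
          ((CM a b).submatrix (fun (i : Fin m) => Equiv.swap 0 k i.succ)
            (fun (j : Fin m) => Equiv.swap 0 l j.succ)).det) =
      ((∏ i, (a i + 1)) - ∏ j, (b j + 1)) * (CM a b).det := by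
  rw [← D_weak m a b ha0 ha1 hab]
  refine Finset.sum_congr rfl fun k _ => Finset.sum_congr rfl fun l _ => ?_
  have hdet : ((CM a b).submatrix (fun (i : Fin m) => Equiv.swap 0 k i.succ)
      (fun (j : Fin m) => Equiv.swap 0 l j.succ)).det =
      ((Equiv.Perm.sign (ck k) : ℤ) : ℂ) * ((Equiv.Perm.sign (ck l) : ℤ) : ℂ) *
        ((CM a b).submatrix k.succAbove l.succAbove).det := by
    have e1 : (CM a b).submatrix (fun (i : Fin m) => Equiv.swap 0 k i.succ)
        (fun (j : Fin m) => Equiv.swap 0 l j.succ) =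
        (((CM a b).submatrix k.succAbove l.succAbove).submatrix (ck k) id).submatrix id (ck l) := by
      ext i j
      simp only [Matrix.submatrix_apply, Matrix.submatrix_submatrix, Function.comp_apply, id_eq]
      rw [hck k i, hck l j]
    rw [e1, Matrix.det_permute', Matrix.det_permute]
    push_cast
    ring
  rw [hdet, embProd k (fun i => a i + 1), embProd k a, embProd l b]
  have := hsgn k
  have := hsgn l
  calc (if k = 0 then (1:ℂ) else -1) * (if l = 0 then (1:ℂ) else -1) *
      ((∏ j : Fin m, b (l.succAbove j)) *
        ((∏ i : Fin m, (a (k.succAbove i) + 1)) / ∏ i : Fin m, a (k.succAbove i)) *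
        (((Equiv.Perm.sign (ck k) : ℤ) : ℂ) * ((Equiv.Perm.sign (ck l) : ℤ) : ℂ) *
          ((CM a b).submatrix k.succAbove l.succAbove).det))
      = ((if k = 0 then (1:ℂ) else -1) * ((Equiv.Perm.sign (ck k) : ℤ) : ℂ)) *
        ((if l = 0 then (1:ℂ) else -1) * ((Equiv.Perm.sign (ck l) : ℤ) : ℂ)) *
        ((∏ j : Fin m, b (l.succAbove j)) *
        ((∏ i : Fin m, (a (k.succAbove i) + 1)) / ∏ i : Fin m, a (k.succAbove i)) *
        ((CM a b).submatrix k.succAbove l.succAbove).det) := by ring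
    _ = (-1 : ℂ) ^ ((k : ℕ) + (l : ℕ)) *
        ((∏ j : Fin m, b (l.succAbove j)) *
        ((∏ i : Fin m, (a (k.succAbove i) + 1)) / ∏ i : Fin m, a (k.succAbove i)) *
        ((CM a b).submatrix k.succAbove l.succAbove).det) := by
        rw [hsgn k, hsgn l, pow_add]

lemma filter_pos_eq (m : ℕ) :
    (univ.filter (fun j : Fin (m + 1) => 0 < (j : ℕ))) = univ.map (Fin.succEmb m) := by
  ext j
  constructor
  · intro hj
    have hj' : 0 < (j : ℕ) := (Finset.mem_filter.1 hj).2
    have h0 : j ≠ 0 := by intro h; subst h; simp at hj'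
    refine Finset.mem_map.2 ⟨j.pred h0, Finset.mem_univ _, ?_⟩
    show (j.pred h0).succ = j
    exact Fin.succ_pred j h0
  · intro hj
    obtain ⟨i, -, rfl⟩ := Finset.mem_map.1 hj
    refine Finset.mem_filter.2 ⟨Finset.mem_univ _, ?_⟩
    show 0 < ((Fin.succEmb m) i : ℕ)
    simp [Fin.succEmb]

lemma prod_filter_pos (m : ℕ) (h : Fin (m + 1) → ℂ) :
    ∏ j ∈ univ.filter (fun j : Fin (m + 1) => 0 < (j : ℕ)), h j = ∏ j : Fin m, h j.succ := by
  rw [filter_pos_eq, Finset.prod_map]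
  rfl

lemma filter_le_eq (m : ℕ) (j : Fin m) :
    (univ.filter (fun i : Fin (m + 1) => j.succ ≤ i)) =
      (univ.filter (fun i : Fin m => j ≤ i)).map (Fin.succEmb m) := by
  ext i
  constructor
  · intro hi
    have hi' : j.succ ≤ i := (Finset.mem_filter.1 hi).2
    have h0 : i ≠ 0 := by
      intro h; subst h
      exact (Fin.succ_ne_zero j) (le_antisymm hi' (Fin.zero_le _))
    refine Finset.mem_map.2 ⟨i.pred h0, Finset.mem_filter.2 ⟨Finset.mem_univ _, ?_⟩, ?_⟩
    · rw [← Fin.succ_le_succ_iff, Fin.succ_pred]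
      exact hi'
    · show (i.pred h0).succ = i
      exact Fin.succ_pred i h0
  · intro hi
    obtain ⟨i', hi', hieq⟩ := Finset.mem_map.1 hi
    refine Finset.mem_filter.2 ⟨Finset.mem_univ _, ?_⟩
    have h2 : j ≤ i' := (Finset.mem_filter.1 hi').2
    have : (Fin.succEmb m) i' = i'.succ := rfl
    rw [this] at hieq
    subst hieq
    exact Fin.succ_le_succ_iff.2 h2

lemma prod_filter_le (m : ℕ) (j : Fin m) (h : Fin (m + 1) → ℂ) :
    ∏ i ∈ univ.filter (fun i : Fin (m + 1) => j.succ ≤ i), h i =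
      ∏ i ∈ univ.filter (fun i : Fin m => j ≤ i), h i.succ := by
  rw [filter_le_eq, Finset.prod_map]
  rfl

lemma split_zero_prod (m : ℕ) (h : Fin (m + 1) → ℂ) :
    ∏ j : Fin (m + 1), h j =
      h 0 * ∏ j ∈ univ.filter (fun j : Fin (m + 1) => 0 < (j : ℕ)), h j := by
  rw [← Finset.prod_filter_mul_prod_filter_not univ (fun j : Fin (m + 1) => 0 < (j : ℕ)) h]
  rw [show (univ.filter fun j : Fin (m + 1) => ¬0 < (j : ℕ)) = {0} by
    ext j
    simp only [Finset.mem_filter, Finset.mem_univ, true_and, Finset.mem_singleton, not_lt,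
      Nat.le_zero]
    exact ⟨fun h => Fin.ext h, fun h => by subst h; rfl⟩]
  rw [Finset.prod_singleton]
  ring

theorem core (n : ℕ) : 1 ≤ n → ∀ (w w' : Fin n → ℂ),
    (∀ i, w i ≠ 0) → (∀ i, w i ≠ -1) → (∀ i j, w i ≠ w' j) →
    (∀ S T : Finset (Fin n), S.card = T.card → 1 ≤ S.card → S.card ≤ n - 1 →
      (∏ i ∈ T, (w i + 1)) ≠ ∏ i ∈ S, (w' i + 1)) →
    lhsSum n w w' = ((∏ j, (w j + 1)) - ∏ j, (w' j + 1)) * (CM w w').det := by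
  induction n with
  | zero => omega
  | succ m IH =>
  intro _ w w' hw0 hw1 hww' hprod
  match m, IH with
  | 0, _ =>
    haveI : Subsingleton (Fin (0 + 1)) := Fin.subsingleton_one
    have hss : ∀ σ : Equiv.Perm (Fin (0 + 1)), σ = 1 := fun σ =>
      Equiv.ext fun x => Subsingleton.elim _ _
    have huniv : (univ : Finset (Equiv.Perm (Fin (0 + 1)))) = {1} :=
      Finset.eq_singleton_iff_unique_mem.2 ⟨Finset.mem_univ _, fun σ _ => hss σ⟩
    have h1 : (univ.filter fun j : Fin (0 + 1) => 0 < (j : ℕ)) = ∅ := by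
      ext j
      simp [Fin.eq_zero j]
    have hne : w 0 - w' 0 ≠ 0 := sub_ne_zero.2 (hww' 0 0)
    have hdet : (CM w w').det = 1 / (w 0 - w' 0) := Matrix.det_fin_one _
    rw [lhsSum, huniv, Finset.sum_singleton, Finset.sum_singleton, h1, hdet]
    simp only [Finset.prod_empty, Equiv.Perm.sign_one, Equiv.Perm.one_apply]
    rw [Fin.prod_univ_succ, Fin.prod_univ_zero, Fin.prod_univ_succ, Fin.prod_univ_zero,
      Fin.prod_univ_succ, Fin.prod_univ_zero]
    simp only [Fin.val_zero, pow_zero]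
    field_simp
    simp only [Units.val_one, Int.cast_one, one_pow, one_mul]
    ring
  | Nat.succ m', IH =>
    set m := m' + 1 with hm
    have hw1' : ∀ i, w i + 1 ≠ 0 := fun i h => hw1 i (by linear_combination h)
    set e : Fin (m + 1) → Fin m → Fin (m + 1) := fun k i => Equiv.swap 0 k i.succ with he
    have heinj : ∀ k, Function.Injective (e k) := fun k =>
      (Equiv.injective _).comp (Fin.succ_injective m)
    set A : Fin (m + 1) → Fin m → ℂ := fun k i => w (e k i) with hA
    set B : Fin (m + 1) → Fin m → ℂ := fun l i => w' (e l i) with hB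
    set Sk : Fin (m + 1) → ℂ := fun k => if k = 0 then (1 : ℂ) else -1 with hSk
    have hA0 : ∀ k i, A k i ≠ 0 := fun k i => hw0 _
    have hA1 : ∀ k i, A k i + 1 ≠ 0 := fun k i => hw1' _
    have hAB : ∀ k l i j, A k i ≠ B l j := fun k l i j => hww' _ _
    have hPA1 : ∀ k, (∏ i, (A k i + 1)) ≠ 0 := fun k =>
      Finset.prod_ne_zero_iff.2 fun i _ => hA1 k i
    have hPA : ∀ k, (∏ i, A k i) ≠ 0 := fun k =>
      Finset.prod_ne_zero_iff.2 fun i _ => hA0 k i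
    have himgw : ∀ (k : Fin (m + 1)) (S : Finset (Fin m)),
        ∏ i ∈ S, (w (e k i) + 1) = ∏ i ∈ S.image (e k), (w i + 1) := fun k S =>
      (Finset.prod_image (f := fun i => w i + 1) (fun x _ y _ h => heinj k h)).symm
    have himgw' : ∀ (l : Fin (m + 1)) (S : Finset (Fin m)),
        ∏ i ∈ S, (w' (e l i) + 1) = ∏ i ∈ S.image (e l), (w' i + 1) := fun l S =>
      (Finset.prod_image (f := fun i => w' i + 1) (fun x _ y _ h => heinj l h)).symm
    have hPne : ∀ k l, (∏ i, (A k i + 1)) ≠ ∏ i, (B l i + 1) := by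
      intro k l
      rw [hA, hB]
      simp only
      rw [himgw k univ, himgw' l univ]
      refine hprod (univ.image (e l)) (univ.image (e k)) ?_ ?_ ?_
      · rw [Finset.card_image_of_injective _ (heinj l),
          Finset.card_image_of_injective _ (heinj k)]
      · rw [Finset.card_image_of_injective _ (heinj l)]
        simp [hm]
      · rw [Finset.card_image_of_injective _ (heinj l)]
        simp [hm]
    have hprodsub : ∀ k l, ∀ S T : Finset (Fin m), S.card = T.card → 1 ≤ S.card →
        S.card ≤ m - 1 → (∏ i ∈ T, (A k i + 1)) ≠ ∏ i ∈ S, (B l i + 1) := by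
      intro k l S T hc h1 h2
      rw [hA, hB]
      simp only
      rw [himgw k T, himgw' l S]
      refine hprod (S.image (e l)) (T.image (e k)) ?_ ?_ ?_
      · rw [Finset.card_image_of_injective _ (heinj l),
          Finset.card_image_of_injective _ (heinj k)]
        exact hc
      · rw [Finset.card_image_of_injective _ (heinj l)]
        exact h1
      · rw [Finset.card_image_of_injective _ (heinj l)]
        omega
    have hIHkl : ∀ k l, lhsSum m (A k) (B l) =
        ((∏ i, (A k i + 1)) - ∏ i, (B l i + 1)) * (CM (A k) (B l)).det := by
      intro k l
      exact IH (by omega) (A k) (B l) (hA0 k) (fun i => hw1 _) (fun i j => hAB k l i j)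
        (fun S T hc h1 h2 => hprodsub k l S T hc h1 h2)
    -- sign cast
    have hs1 : ∀ (k : Fin (m + 1)) (τ : Equiv.Perm (Fin m)),
        ((Equiv.Perm.sign (Equiv.Perm.decomposeFin.symm (k, τ)) : ℤ) : ℂ) =
          Sk k * ((Equiv.Perm.sign τ : ℤ) : ℂ) := by
      intro k τ
      rw [Equiv.Perm.decomposeFin.symm_sign, hSk]
      by_cases h : k = 0 <;> simp [h]
    -- the per-term identity
    have hterm : ∀ (k l : Fin (m + 1)) (τ τ' : Equiv.Perm (Fin m)),
        (((Equiv.Perm.sign (Equiv.Perm.decomposeFin.symm (k, τ)) : ℤ) : ℂ) *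
          ((Equiv.Perm.sign (Equiv.Perm.decomposeFin.symm (l, τ')) : ℤ) : ℂ) *
          (∏ i : Fin (m + 1), (w' (Equiv.Perm.decomposeFin.symm (l, τ') i) /
            w (Equiv.Perm.decomposeFin.symm (k, τ) i)) ^ (i : ℕ)) /
          ∏ j ∈ Finset.univ.filter (fun j : Fin (m + 1) => 0 < (j : ℕ)),
            (1 - ∏ i ∈ Finset.univ.filter (fun i : Fin (m + 1) => j ≤ i),
              ((w' (Equiv.Perm.decomposeFin.symm (l, τ') i) + 1) /
                (w (Equiv.Perm.decomposeFin.symm (k, τ) i) + 1)))) =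
        (Sk k * Sk l * ((∏ i, B l i) / (∏ i, A k i)) /
            (1 - (∏ i, (B l i + 1)) / (∏ i, (A k i + 1)))) *
          (((Equiv.Perm.sign τ : ℤ) : ℂ) * ((Equiv.Perm.sign τ' : ℤ) : ℂ) *
            (∏ i : Fin m, (B l (τ' i) / A k (τ i)) ^ (i : ℕ)) /
            ∏ j ∈ Finset.univ.filter (fun j : Fin m => 0 < (j : ℕ)),
              (1 - ∏ i ∈ Finset.univ.filter (fun i : Fin m => j ≤ i),
                ((B l (τ' i) + 1) / (A k (τ i) + 1)))) := by
      intro k l τ τ'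
      have happs : ∀ (k : Fin (m + 1)) (τ : Equiv.Perm (Fin m)) (i : Fin m),
          Equiv.Perm.decomposeFin.symm (k, τ) i.succ = e k (τ i) := by
        intro k τ i
        rw [Equiv.Perm.decomposeFin_symm_apply_succ, he]
      have hnum : (∏ i : Fin (m + 1), (w' (Equiv.Perm.decomposeFin.symm (l, τ') i) /
            w (Equiv.Perm.decomposeFin.symm (k, τ) i)) ^ (i : ℕ)) =
          ((∏ i, B l i) / (∏ i, A k i)) *
            ∏ i : Fin m, (B l (τ' i) / A k (τ i)) ^ (i : ℕ) := by
        rw [Fin.prod_univ_succ]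
        simp only [Fin.val_zero, pow_zero, one_mul, happs, Fin.val_succ]
        calc ∏ i : Fin m, (w' (e l (τ' i)) / w (e k (τ i))) ^ ((i : ℕ) + 1)
            = ∏ i : Fin m, ((B l (τ' i) / A k (τ i)) ^ (i : ℕ) * (B l (τ' i) / A k (τ i))) := by
              refine Finset.prod_congr rfl fun i _ => ?_
              rw [pow_succ, hA, hB]
          _ = (∏ i : Fin m, (B l (τ' i) / A k (τ i)) ^ (i : ℕ)) *
                ∏ i : Fin m, (B l (τ' i) / A k (τ i)) := Finset.prod_mul_distrib
          _ = ((∏ i, B l i) / (∏ i, A k i)) *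
                ∏ i : Fin m, (B l (τ' i) / A k (τ i)) ^ (i : ℕ) := by
              rw [Finset.prod_div_distrib, Equiv.prod_comp τ' (B l), Equiv.prod_comp τ (A k)]
              ring
      have hden : (∏ j ∈ Finset.univ.filter (fun j : Fin (m + 1) => 0 < (j : ℕ)),
            (1 - ∏ i ∈ Finset.univ.filter (fun i : Fin (m + 1) => j ≤ i),
              ((w' (Equiv.Perm.decomposeFin.symm (l, τ') i) + 1) /
                (w (Equiv.Perm.decomposeFin.symm (k, τ) i) + 1)))) =
          (1 - (∏ i, (B l i + 1)) / (∏ i, (A k i + 1))) *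
            ∏ j ∈ Finset.univ.filter (fun j : Fin m => 0 < (j : ℕ)),
              (1 - ∏ i ∈ Finset.univ.filter (fun i : Fin m => j ≤ i),
                ((B l (τ' i) + 1) / (A k (τ i) + 1))) := by
        rw [prod_filter_pos m (fun j => 1 - ∏ i ∈ Finset.univ.filter
            (fun i : Fin (m + 1) => j ≤ i),
            ((w' (Equiv.Perm.decomposeFin.symm (l, τ') i) + 1) /
              (w (Equiv.Perm.decomposeFin.symm (k, τ) i) + 1)))]
        have hj : ∀ j : Fin m, (1 - ∏ i ∈ Finset.univ.filter
              (fun i : Fin (m + 1) => j.succ ≤ i),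
              ((w' (Equiv.Perm.decomposeFin.symm (l, τ') i) + 1) /
                (w (Equiv.Perm.decomposeFin.symm (k, τ) i) + 1))) =
            (1 - ∏ i ∈ Finset.univ.filter (fun i : Fin m => j ≤ i),
              ((B l (τ' i) + 1) / (A k (τ i) + 1))) := by
          intro j
          rw [prod_filter_le]
          congr 1
          refine Finset.prod_congr rfl fun i _ => ?_
          rw [happs, happs, hA, hB]
        rw [Finset.prod_congr rfl fun j _ => hj j]
        rw [split_zero_prod m' (fun j : Fin m => 1 - ∏ i ∈ Finset.univ.filter
            (fun i : Fin m => j ≤ i), ((B l (τ' i) + 1) / (A k (τ i) + 1)))]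
        congr 1
        have hfull : (Finset.univ.filter (fun i : Fin m => (0 : Fin m) ≤ i)) = univ := by
          refine Finset.filter_true_of_mem fun i _ => Fin.zero_le i
        rw [hfull]
        congr 1
        calc ∏ i : Fin m, ((B l (τ' i) + 1) / (A k (τ i) + 1))
            = (∏ i : Fin m, (B l (τ' i) + 1)) / ∏ i : Fin m, (A k (τ i) + 1) :=
              Finset.prod_div_distrib _ _
          _ = (∏ i, (B l i + 1)) / (∏ i, (A k i + 1)) := by
              rw [Equiv.prod_comp τ' (fun i => B l i + 1), Equiv.prod_comp τ (fun i => A k i + 1)]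
      rw [hs1 k τ, hs1 l τ', hnum, hden]
      rw [show Sk k * ((Equiv.Perm.sign τ : ℤ) : ℂ) * (Sk l * ((Equiv.Perm.sign τ' : ℤ) : ℂ)) *
          (((∏ i, B l i) / (∏ i, A k i)) * ∏ i : Fin m, (B l (τ' i) / A k (τ i)) ^ (i : ℕ)) =
          (Sk k * Sk l * ((∏ i, B l i) / (∏ i, A k i))) *
          (((Equiv.Perm.sign τ : ℤ) : ℂ) * ((Equiv.Perm.sign τ' : ℤ) : ℂ) *
            ∏ i : Fin m, (B l (τ' i) / A k (τ i)) ^ (i : ℕ)) from by ring]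
      rw [mul_div_mul_comm]
    -- now the sum manipulation
    calc lhsSum (m + 1) w w'
        = ∑ p : Fin (m + 1) × Equiv.Perm (Fin m), ∑ q : Fin (m + 1) × Equiv.Perm (Fin m),
            (((Equiv.Perm.sign (Equiv.Perm.decomposeFin.symm p) : ℤ) : ℂ) *
              ((Equiv.Perm.sign (Equiv.Perm.decomposeFin.symm q) : ℤ) : ℂ) *
              (∏ i : Fin (m + 1), (w' (Equiv.Perm.decomposeFin.symm q i) /
                w (Equiv.Perm.decomposeFin.symm p i)) ^ (i : ℕ)) /
              ∏ j ∈ Finset.univ.filter (fun j : Fin (m + 1) => 0 < (j : ℕ)),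
                (1 - ∏ i ∈ Finset.univ.filter (fun i : Fin (m + 1) => j ≤ i),
                  ((w' (Equiv.Perm.decomposeFin.symm q i) + 1) /
                    (w (Equiv.Perm.decomposeFin.symm p i) + 1)))) := by
          rw [lhsSum]
          refine Fintype.sum_equiv (Equiv.Perm.decomposeFin) _ _ fun σ => ?_
          rw [Equiv.symm_apply_apply]
          refine Fintype.sum_equiv (Equiv.Perm.decomposeFin) _ _ fun σ' => ?_
          rw [Equiv.symm_apply_apply]
      _ = ∑ k : Fin (m + 1), ∑ l : Fin (m + 1),
            (Sk k * Sk l * ((∏ i, B l i) / (∏ i, A k i)) /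
              (1 - (∏ i, (B l i + 1)) / (∏ i, (A k i + 1)))) * lhsSum m (A k) (B l) := by
          rw [Fintype.sum_prod_type]
          refine Finset.sum_congr rfl fun k _ => ?_
          calc (∑ τ : Equiv.Perm (Fin m), ∑ q : Fin (m + 1) × Equiv.Perm (Fin m), _)
              = ∑ τ : Equiv.Perm (Fin m), ∑ l : Fin (m + 1), ∑ τ' : Equiv.Perm (Fin m), _ := by
                exact Finset.sum_congr rfl fun τ _ => Fintype.sum_prod_type _
            _ = ∑ l : Fin (m + 1), ∑ τ : Equiv.Perm (Fin m), ∑ τ' : Equiv.Perm (Fin m), _ :=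
                Finset.sum_comm
            _ = ∑ l : Fin (m + 1),
                  (Sk k * Sk l * ((∏ i, B l i) / (∏ i, A k i)) /
                    (1 - (∏ i, (B l i + 1)) / (∏ i, (A k i + 1)))) * lhsSum m (A k) (B l) := by
                refine Finset.sum_congr rfl fun l _ => ?_
                rw [lhsSum, Finset.mul_sum]
                refine Finset.sum_congr rfl fun τ _ => ?_
                rw [Finset.mul_sum]
                refine Finset.sum_congr rfl fun τ' _ => ?_
                exact hterm k l τ τ'
      _ = ∑ k : Fin (m + 1), ∑ l : Fin (m + 1),
            Sk k * Sk l *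
              ((∏ j : Fin m, B l j) *
                ((∏ i : Fin m, (A k i + 1)) / ∏ i : Fin m, A k i) *
                ((CM w w').submatrix (fun (i : Fin m) => Equiv.swap 0 k i.succ)
                  (fun (j : Fin m) => Equiv.swap 0 l j.succ)).det) := by
          refine Finset.sum_congr rfl fun k _ => Finset.sum_congr rfl fun l _ => ?_
          rw [hIHkl k l]
          have hdetEq : (CM (A k) (B l)).det =
              ((CM w w').submatrix (fun (i : Fin m) => Equiv.swap 0 k i.succ)
                (fun (j : Fin m) => Equiv.swap 0 l j.succ)).det := by
            congr 1
          have hsub : (1 - (∏ i, (B l i + 1)) / (∏ i, (A k i + 1))) ≠ 0 := by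
            rw [sub_ne_zero]
            intro h1
            rw [eq_comm, div_eq_one_iff_eq (hPA1 k)] at h1
            exact hPne k l h1.symm
          rw [← hdetEq]
          have h2 : (∏ i, (A k i + 1)) - (∏ i, (B l i + 1)) ≠ 0 :=
            sub_ne_zero.2 (hPne k l)
          field_simp [hPA k, hPA1 k, h2]
      _ = ((∏ j, (w j + 1)) - ∏ j, (w' j + 1)) * (CM w w').det := by
          rw [← lemD m w w' hw0 hw1' hww']

end
end PermSumAux

/-- The double-permutation summation identity (Lemma: identity_01).
Indices are 0-based: the 1-based index `i` corresponds to `i.val + 1`, so the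
exponent `i - 1` becomes `(i : ℕ)`, the product over `j = 2, …, n` becomes the
product over `j : Fin n` with `0 < (j : ℕ)`, and the product over `i = j, …, n`
becomes the product over `i : Fin n` with `j ≤ i`. -/
theorem perm_sum_eq_cauchy
    (n : ℕ) (hn : 1 ≤ n) (w w' : Fin n → ℂ)
    (hw0 : ∀ i, w i ≠ 0) (hw1 : ∀ i, w i ≠ -1)
    (hww' : ∀ i j, w i ≠ w' j)
    (hprod : ∀ S T : Finset (Fin n), S.card = T.card → 1 ≤ S.card → S.card ≤ n - 1 →
      (∏ i ∈ T, (w i + 1)) ≠ ∏ i ∈ S, (w' i + 1)) :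
    (∑ σ : Equiv.Perm (Fin n), ∑ σ' : Equiv.Perm (Fin n),
        ((Equiv.Perm.sign σ : ℤ) : ℂ) * ((Equiv.Perm.sign σ' : ℤ) : ℂ) *
          (∏ i : Fin n, (w' (σ' i) / w (σ i)) ^ (i : ℕ)) /
          ∏ j ∈ Finset.univ.filter (fun j : Fin n => 0 < (j : ℕ)),
            (1 - ∏ i ∈ Finset.univ.filter (fun i : Fin n => j ≤ i),
              ((w' (σ' i) + 1) / (w (σ i) + 1)))) =
      ((∏ j, (w j + 1)) - ∏ j, (w' j + 1)) *
        Matrix.det (Matrix.of fun i i' : Fin n => 1 / (w i - w' i')) := by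
  exact PermSumAux.core n hn w w' hw0 hw1 hww' hprod
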